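/- arXiv:1309.2266 — 4 statements merged into one kernel-verified Lean document; each statement's English description precedes it below -/
import Mathlib

section
/- If a graph G has a bramble B of order greater than k, then every tree-decomposition of G has some bag that covers B (i.e., meets every element of B); consequently the tree-width of G is at least k. -/
open Finset

variable {V : Type} [Fintype V] [DecidableEq V]

/-- Two vertex sets touch: they intersect or are joined by an edge. -/
def Touches (G : SimpleGraph V) (X Y : Finset V) : Prop :=
  (X ∩ Y).Nonempty ∨ ∃ x ∈ X, ∃ y ∈ Y, G.Adj x y

/-- `X` is a connected vertex set of `G`. -/
def IsConnectedSet (G : SimpleGraph V) (X : Finset V) : Prop :=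
  (G.induce (X : Set V)).Connected

/-- A bramble: a family of pairwise touching connected vertex sets. -/
def IsBramble (G : SimpleGraph V) (B : Set (Finset V)) : Prop :=
  (∀ X ∈ B, IsConnectedSet G X) ∧ ∀ X ∈ B, ∀ Y ∈ B, Touches G X Y

/-- `S` covers the family `B`: it meets every member. -/
def Covers (S : Finset V) (B : Set (Finset V)) : Prop :=
  ∀ X ∈ B, (S ∩ X).Nonempty

/-- The order of `B` is `> k`: every cover has more than `k` vertices. -/
def BrambleOrderGT (B : Set (Finset V)) (k : ℕ) : Prop :=
  ∀ S : Finset V, Covers S B → k < S.card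

/-- `(T, bag)` is a tree-decomposition of `G`. -/
def IsTreeDecomp {ι : Type} (G : SimpleGraph V) (T : SimpleGraph ι)
    (bag : ι → Finset V) : Prop :=
  T.IsTree ∧
  (∀ v : V, ∃ t, v ∈ bag t) ∧
  (∀ v w : V, G.Adj v w → ∃ t, v ∈ bag t ∧ w ∈ bag t) ∧
  (∀ v : V, (T.induce {t | v ∈ bag t}).Connected)

/-- `G` has a tree-decomposition all of whose bags have size `≤ k`,
i.e. tree-width `< k` (equivalently `≤ k - 1`). -/
def HasDecompOfWidthLT (G : SimpleGraph V) (k : ℕ) : Prop :=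
  ∃ (ι : Type) (T : SimpleGraph ι) (bag : ι → Finset V),
    IsTreeDecomp G T bag ∧ ∀ t, (bag t).card ≤ k

/-- An internal node of a tree: one with at least two distinct neighbours. -/
def IsInternal {ι : Type} (T : SimpleGraph ι) (t : ι) : Prop :=
  ∃ u u', T.Adj t u ∧ T.Adj t u' ∧ u ≠ u'

/-- A partial (<k)-decomposition: no big internal bag and at least one small bag. -/
def IsPartialDecomp {ι : Type} (G : SimpleGraph V) (k : ℕ) (T : SimpleGraph ι)
    (bag : ι → Finset V) : Prop :=
  IsTreeDecomp G T bag ∧ (∀ t, IsInternal T t → (bag t).card ≤ k) ∧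
    ∃ t, (bag t).card ≤ k

/-- `X` is the `k`-flap at leaf `t`: `t` is a leaf with unique neighbour `u`,
its bag is big, and `X = bag t \ bag u`. -/
def IsFlapAt {ι : Type} (k : ℕ) (T : SimpleGraph ι) (bag : ι → Finset V)
    (t : ι) (X : Finset V) : Prop :=
  ∃ u, T.Adj t u ∧ (∀ u', T.Adj t u' → u' = u) ∧ k < (bag t).card ∧
    X = bag t \ bag u

/-- `X` is a `k`-flap of the decomposition `(T, bag)`. -/
def IsFlap {ι : Type} (k : ℕ) (T : SimpleGraph ι) (bag : ι → Finset V)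
    (X : Finset V) : Prop :=
  ∃ t, IsFlapAt k T bag t X

/-- `X` is a `k`-flap of some partial (<k)-decomposition of `G`. -/
def FlapOf (G : SimpleGraph V) (k : ℕ) (X : Finset V) : Prop :=
  ∃ (ι : Type) (T : SimpleGraph ι) (bag : ι → Finset V),
    IsPartialDecomp G k T bag ∧ IsFlap k T bag X

/-- The neighbourhood of a vertex set: vertices outside `X` adjacent to `X`. -/
def nbhd (G : SimpleGraph V) [DecidableRel G.Adj] (X : Finset V) : Finset V :=
  Finset.univ.filter fun v => v ∉ X ∧ ∃ x ∈ X, G.Adj v x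

/-- `C` is a connected component of `G - S`. -/
def IsCompOf (G : SimpleGraph V) (S : Finset V) (C : Finset V) : Prop :=
  C.Nonempty ∧ C ∩ S = ∅ ∧ IsConnectedSet G C ∧
    ∀ D : Finset V, C ⊆ D → D ∩ S = ∅ → IsConnectedSet G D → D = C

/-- `t` lies on a path from `x` to `y` in `T` (in a tree, the unique path). -/
def OnTreePath {ι : Type} (T : SimpleGraph ι) (x y t : ι) : Prop :=
  ∃ p : T.Walk x y, p.IsPath ∧ t ∈ p.support

/-- A tree-decomposition of the induced subgraph `G[B]`, with bags inside `B`. -/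
def IsTreeDecompOn {ι : Type} (G : SimpleGraph V) (B : Finset V)
    (T : SimpleGraph ι) (bag : ι → Finset V) : Prop :=
  T.IsTree ∧
  (∀ t, bag t ⊆ B) ∧
  (∀ v ∈ B, ∃ t, v ∈ bag t) ∧
  (∀ v w : V, v ∈ B → w ∈ B → G.Adj v w → ∃ t, v ∈ bag t ∧ w ∈ bag t) ∧
  (∀ v ∈ B, (T.induce {t | v ∈ bag t}).Connected)

/-- A partial (<k)-decomposition of the induced subgraph `G[B]`. -/
def IsPartialDecompOn {ι : Type} (G : SimpleGraph V) (B : Finset V) (k : ℕ)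
    (T : SimpleGraph ι) (bag : ι → Finset V) : Prop :=
  IsTreeDecompOn G B T bag ∧ (∀ t, IsInternal T t → (bag t).card ≤ k) ∧
    ∃ t, (bag t).card ≤ k

/-- No component of `G - S` meets both `X` and `Y`. -/
def SepAll (G : SimpleGraph V) (S X Y : Finset V) : Prop :=
  ∀ C : Finset V, IsCompOf G S C → ¬((C ∩ X).Nonempty ∧ (C ∩ Y).Nonempty)


set_option linter.unusedSectionVars false

namespace BrambleTW


variable {ι : Type}

/-- A set of nodes of `T` is path-closed if it is nonempty and contains every
path between two of its elements. -/
def PathClosed (T : SimpleGraph ι) (S : Set ι) : Prop :=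
  S.Nonempty ∧ ∀ a ∈ S, ∀ b ∈ S, ∀ p : T.Walk a b, p.IsPath → ∀ t ∈ p.support, t ∈ S

lemma pathClosed_of_connected {T : SimpleGraph ι} (hT : T.IsTree) {S : Set ι}
    (h : (T.induce S).Connected) : PathClosed T S := by
  classical
  constructor
  · obtain ⟨⟨x, hx⟩⟩ := h.nonempty
    exact ⟨x, hx⟩
  · intro a ha b hb p hp t ht
    obtain ⟨w⟩ := h.preconnected ⟨a, ha⟩ ⟨b, hb⟩
    set w' : T.Walk a b := w.map (SimpleGraph.Embedding.induce S).toHom with hw'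
    have hsub : ∀ x ∈ w'.support, x ∈ S := by
      intro x hx
      have hx : x ∈ (w.map (SimpleGraph.Embedding.induce S).toHom).support := hx
      rw [SimpleGraph.Walk.support_map] at hx
      obtain ⟨y, hy, rfl⟩ := List.mem_map.mp hx
      exact y.2
    have hpq : p = (w'.toPath : T.Walk a b) := by
      have := hT.IsAcyclic.path_unique ⟨p, hp⟩ w'.toPath
      exact congrArg Subtype.val this
    rw [hpq] at ht
    exact hsub t (SimpleGraph.Walk.support_toPath_subset w' ht)

lemma pathClosed_inter {T : SimpleGraph ι} {S S' : Set ι} (h : PathClosed T S)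
    (h' : PathClosed T S') (hne : (S ∩ S').Nonempty) : PathClosed T (S ∩ S') :=
  ⟨hne, fun a ha b hb p hp t ht =>
    ⟨h.2 a ha.1 b hb.1 p hp t ht, h'.2 a ha.2 b hb.2 p hp t ht⟩⟩

lemma takeUntil_snd_mem [DecidableEq ι] {T : SimpleGraph ι} {a a' b x : ι}
    (hadj : T.Adj a a') (p' : T.Walk a' b)
    (hx : x ∈ (SimpleGraph.Walk.cons hadj p').support) (hxa : a ≠ x) :
    a' ∈ ((SimpleGraph.Walk.cons hadj p').takeUntil x hx).support := by
  rw [SimpleGraph.Walk.takeUntil, dif_neg hxa]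
  simp

/-- Helly for three path-closed sets in a tree. -/
lemma helly3 [DecidableEq ι] {T : SimpleGraph ι} (hT : T.IsTree) {S1 S2 S3 : Set ι}
    (h1 : PathClosed T S1) (h2 : PathClosed T S2) (h3 : PathClosed T S3)
    {a b c : ι} (ha1 : a ∈ S1) (ha2 : a ∈ S2) (hb1 : b ∈ S1) (hb3 : b ∈ S3)
    (hc2 : c ∈ S2) (hc3 : c ∈ S3) : ∃ m, m ∈ S1 ∧ m ∈ S2 ∧ m ∈ S3 := by
  obtain ⟨p0⟩ := hT.isConnected.preconnected a b
  suffices H : ∀ n (a : ι) (p : T.Walk a b), p.length = n → p.IsPath → a ∈ S1 → a ∈ S2 →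
      ∃ m, m ∈ S1 ∧ m ∈ S2 ∧ m ∈ S3 from
    H _ a (p0.toPath : T.Walk a b) rfl p0.toPath.2 ha1 ha2
  clear ha1 ha2 a p0
  intro n
  induction n using Nat.strong_induction_on with
  | _ n IH =>
    intro a p hlen hp ha1 ha2
    by_cases ha3 : a ∈ S3
    · exact ⟨a, ha1, ha2, ha3⟩
    cases p with
    | nil => exact absurd hb3 ha3
    | @cons _ a' _ hadj p' =>
      obtain ⟨q0⟩ := hT.isConnected.preconnected a c
      set q : T.Walk a c := (q0.toPath : T.Walk a c) with hqdef
      have hqp : q.IsPath := q0.toPath.2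
      by_cases hq : a' ∈ q.support
      · have ha'2 : a' ∈ S2 := h2.2 a ha2 c hc2 q hqp a' hq
        have ha'1 : a' ∈ S1 := h1.2 a ha1 b hb1 _ hp a' (by simp)
        exact IH p'.length (by rw [← hlen, SimpleGraph.Walk.length_cons]; omega) a' p' rfl hp.of_cons ha'1 ha'2
      · exfalso
        apply ha3
        have hdisj : ∀ x, x ∈ q.support → x ∈ (SimpleGraph.Walk.cons hadj p').support → x = a := by
          intro x hxq hxp
          by_contra hxa
          have hax : a ≠ x := fun h => hxa h.symm
          have t1 : q.takeUntil x hxq = (SimpleGraph.Walk.cons hadj p').takeUntil x hxp := by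
            have := hT.IsAcyclic.path_unique ⟨_, hqp.takeUntil hxq⟩ ⟨_, hp.takeUntil hxp⟩
            exact congrArg Subtype.val this
          have ha' : a' ∈ (q.takeUntil x hxq).support := by
            rw [t1]; exact takeUntil_snd_mem hadj p' hxp hax
          exact hq (SimpleGraph.Walk.support_takeUntil_subset _ hxq ha')
        have hpath : (q.reverse.append (SimpleGraph.Walk.cons hadj p')).IsPath := by
          rw [SimpleGraph.Walk.isPath_def, SimpleGraph.Walk.support_append]
          apply List.Nodup.append
          · exact hqp.reverse.support_nodup
          · exact hp.support_nodup.tail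
          · intro x hxq hxt
            have hxq' : x ∈ q.support := by
              rwa [SimpleGraph.Walk.support_reverse, List.mem_reverse] at hxq
            have hxp : x ∈ (SimpleGraph.Walk.cons hadj p').support := List.mem_of_mem_tail hxt
            have : x = a := hdisj x hxq' hxp
            subst this
            simp only [SimpleGraph.Walk.support_cons, List.tail_cons] at hxt
            exact ((SimpleGraph.Walk.cons_isPath_iff hadj p').mp hp).2 hxt
        refine h3.2 c hc3 b hb3 _ hpath a ?_
        rw [SimpleGraph.Walk.mem_support_append_iff]
        left
        exact SimpleGraph.Walk.end_mem_support _

/-- Helly for a finite family of pairwise-intersecting path-closed sets in a tree. -/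
lemma hellyList [DecidableEq ι] {T : SimpleGraph ι} (hT : T.IsTree) :
    ∀ (n : ℕ) (L : List (Set ι)), L.length = n → L ≠ [] → (∀ S ∈ L, PathClosed T S) →
      (∀ S ∈ L, ∀ S' ∈ L, (S ∩ S').Nonempty) → ∃ t, ∀ S ∈ L, t ∈ S := by
  intro n
  induction n using Nat.strong_induction_on with
  | _ n IH =>
    intro L hlen hne hpc hint
    match L with
    | [] => exact absurd rfl hne
    | [S] =>
      obtain ⟨x, hx⟩ := (hpc S (by simp)).1
      exact ⟨x, by simpa using hx⟩
    | S :: S' :: L'' =>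
      have hS : PathClosed T S := hpc S (by simp)
      have hS' : PathClosed T S' := hpc S' (by simp)
      have hSS' : (S ∩ S').Nonempty := hint S (by simp) S' (by simp)
      have hpcI : PathClosed T (S ∩ S') := pathClosed_inter hS hS' hSS'
      have key : ∀ U ∈ L'', ((S ∩ S') ∩ U).Nonempty := by
        intro U hU
        have hUpc := hpc U (by simp [hU])
        obtain ⟨a, haS, haS'⟩ := hSS'
        obtain ⟨b, hbS, hbU⟩ := hint S (by simp) U (by simp [hU])
        obtain ⟨c, hcS', hcU⟩ := hint S' (by simp) U (by simp [hU])
        obtain ⟨m, hm1, hm2, hm3⟩ := helly3 hT hS hS' hUpc haS haS' hbS hbU hcS' hcU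
        exact ⟨m, ⟨hm1, hm2⟩, hm3⟩
      obtain ⟨t, ht⟩ := IH (L''.length + 1) (by simp at hlen; omega) ((S ∩ S') :: L'') (by simp)
        (by simp) (by
          intro U hU
          simp only [List.mem_cons] at hU
          rcases hU with rfl | hU
          · exact hpcI
          · exact hpc U (by simp [hU]))
        (by
          intro U hU W hW
          simp only [List.mem_cons] at hU hW
          rcases hU with rfl | hU <;> rcases hW with rfl | hW
          · exact ⟨hSS'.choose, hSS'.choose_spec, hSS'.choose_spec⟩
          · obtain ⟨m, hm⟩ := key W hW; exact ⟨m, hm⟩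
          · obtain ⟨m, hm1, hm2⟩ := key U hU; exact ⟨m, hm2, hm1⟩
          · exact hint U (by simp [hU]) W (by simp [hW]))
      refine ⟨t, ?_⟩
      intro U hU
      simp only [List.mem_cons] at hU
      have h0 := ht (S ∩ S') (by simp)
      rcases hU with rfl | rfl | hU
      · exact h0.1
      · exact h0.2
      · exact ht U (by simp [hU])



variable {ι : Type}

def induceHomOfLE (T : SimpleGraph ι) {A A' : Set ι} (h : A ⊆ A') :
    T.induce A →g T.induce A' where
  toFun := Set.inclusion h
  map_rel' := fun hadj => hadj

/-- The support of a vertex set `X` in a decomposition. -/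
def supp {ι : Type} (bag : ι → Finset V) (X : Finset V) : Set ι :=
  {t | ∃ v ∈ X, v ∈ bag t}

lemma reach_single {G : SimpleGraph V} {T : SimpleGraph ι} {bag : ι → Finset V}
    (hdec : IsTreeDecomp G T bag) (X : Finset V) {v : V} (hv : v ∈ X)
    {t1 t2 : ι} (h1 : v ∈ bag t1) (h2 : v ∈ bag t2) :
    (T.induce (supp bag X)).Reachable ⟨t1, ⟨v, hv, h1⟩⟩ ⟨t2, ⟨v, hv, h2⟩⟩ := by
  have hconn := hdec.2.2.2 v
  have hr := hconn.preconnected ⟨t1, h1⟩ ⟨t2, h2⟩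
  have hsub : {t | v ∈ bag t} ⊆ supp bag X := fun t ht => ⟨v, hv, ht⟩
  exact hr.map (induceHomOfLE T hsub)

lemma reach_aux {G : SimpleGraph V} {T : SimpleGraph ι} {bag : ι → Finset V}
    (hdec : IsTreeDecomp G T bag) (X : Finset V) :
    ∀ (x y : (X : Set V)) (_ : (G.induce (X : Set V)).Walk x y)
      (t1 : ι) (h1 : (x : V) ∈ bag t1) (t2 : ι) (h2 : (y : V) ∈ bag t2),
      (T.induce (supp bag X)).Reachable ⟨t1, ⟨x, x.2, h1⟩⟩ ⟨t2, ⟨y, y.2, h2⟩⟩ := by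
  intro x y w
  induction w with
  | nil =>
    rename_i u
    intro t1 h1 t2 h2
    exact reach_single hdec X (Finset.mem_coe.mp u.2) h1 h2
  | @cons x z y hadj w' IH =>
    intro t1 h1 t2 h2
    obtain ⟨s, hs1, hs2⟩ := hdec.2.2.1 x z hadj
    have r1 : (T.induce (supp bag X)).Reachable ⟨t1, ⟨x, x.2, h1⟩⟩ ⟨s, ⟨x, x.2, hs1⟩⟩ :=
      reach_single hdec X (Finset.mem_coe.mp x.2) h1 hs1
    have r2 := IH s hs2 t2 h2
    exact r1.trans r2

lemma connected_supp {G : SimpleGraph V} {T : SimpleGraph ι} {bag : ι → Finset V}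
    (hdec : IsTreeDecomp G T bag) {X : Finset V} (hX : IsConnectedSet G X) :
    (T.induce (supp bag X)).Connected := by
  have hne : Nonempty (X : Set V) := hX.nonempty
  obtain ⟨v, hv⟩ := hne
  obtain ⟨t0, ht0⟩ := hdec.2.1 v
  rw [SimpleGraph.connected_iff]
  refine ⟨?_, ⟨⟨t0, ⟨v, hv, ht0⟩⟩⟩⟩
  rintro ⟨t1, v1, hv1, h1⟩ ⟨t2, v2, hv2, h2⟩
  obtain ⟨w⟩ := hX.preconnected ⟨v1, hv1⟩ ⟨v2, hv2⟩
  exact reach_aux hdec X ⟨v1, hv1⟩ ⟨v2, hv2⟩ w t1 h1 t2 h2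

end BrambleTW

set_option linter.unusedSectionVars true

/-- if `G` has a bramble of order `> k`, then every
tree-decomposition of `G` has a bag covering the bramble; consequently
the tree-width of `G` is at least `k`. -/
theorem bramble_forces_cover_and_treewidth (G : SimpleGraph V) (k : ℕ)
    (B : Set (Finset V)) (hbr : IsBramble G B) (hord : BrambleOrderGT B k) :
    (∀ (ι : Type) (T : SimpleGraph ι) (bag : ι → Finset V),
        IsTreeDecomp G T bag → ∃ t, Covers (bag t) B) ∧
      ¬ HasDecompOfWidthLT G k := by
  classical
  have main : ∀ (ι : Type) (T : SimpleGraph ι) (bag : ι → Finset V),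
      IsTreeDecomp G T bag → ∃ t, Covers (bag t) B := by
    intro ι T bag hdec
    have hT : T.IsTree := hdec.1
    rcases Set.eq_empty_or_nonempty B with hB | hB
    · obtain ⟨t0⟩ := hT.isConnected.nonempty
      exact ⟨t0, fun X hX => absurd hX (by simp [hB])⟩
    · have hfin : B.Finite := Set.toFinite B
      set L : List (Set ι) := hfin.toFinset.toList.map (fun X => BrambleTW.supp bag X) with hL
      have hmem : ∀ S ∈ L, ∃ X ∈ B, S = BrambleTW.supp bag X := by
        intro S hS
        rw [hL, List.mem_map] at hS
        obtain ⟨X, hX, rfl⟩ := hS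
        rw [Finset.mem_toList, Set.Finite.mem_toFinset] at hX
        exact ⟨X, hX, rfl⟩
      have hmem' : ∀ X ∈ B, BrambleTW.supp bag X ∈ L := by
        intro X hX
        rw [hL, List.mem_map]
        exact ⟨X, by rw [Finset.mem_toList, Set.Finite.mem_toFinset]; exact hX, rfl⟩
      have hne : L ≠ [] := by
        obtain ⟨X, hX⟩ := hB
        have := hmem' X hX
        intro h
        rw [h] at this
        simp at this
      obtain ⟨t, ht⟩ := BrambleTW.hellyList hT L.length L rfl hne
        (by
          intro S hS
          obtain ⟨X, hX, rfl⟩ := hmem S hS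
          exact BrambleTW.pathClosed_of_connected hT (BrambleTW.connected_supp hdec (hbr.1 X hX)))
        (by
          intro S hS S' hS'
          obtain ⟨X, hX, rfl⟩ := hmem S hS
          obtain ⟨Y, hY, rfl⟩ := hmem S' hS'
          rcases hbr.2 X hX Y hY with ⟨v, hv⟩ | ⟨x, hx, y, hy, hadj⟩
          · rw [Finset.mem_inter] at hv
            obtain ⟨s, hs⟩ := hdec.2.1 v
            exact ⟨s, ⟨v, hv.1, hs⟩, ⟨v, hv.2, hs⟩⟩
          · obtain ⟨s, hs1, hs2⟩ := hdec.2.2.1 x y hadj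
            exact ⟨s, ⟨x, hx, hs1⟩, ⟨y, hy, hs2⟩⟩)
      refine ⟨t, ?_⟩
      intro X hX
      obtain ⟨v, hv, hvbag⟩ := ht (BrambleTW.supp bag X) (hmem' X hX)
      exact ⟨v, Finset.mem_inter.mpr ⟨hvbag, hv⟩⟩
  refine ⟨main, ?_⟩
  rintro ⟨ι, T, bag, hdec, hsize⟩
  obtain ⟨t, ht⟩ := main ι T bag hdec
  exact absurd (hsize t) (not_le.mpr (hord (bag t) ht))
end

section
/- Menger-style replacement: Let (T, l) be a tree-decomposition of G, let x be a node of T, and let S be a vertex set such that there exist |S| vertex-disjoint paths (P_s)_{s∈S} from l(x) to S each meeting a set B only in its endpoint s. Define l'(t) = (l(t) ∩ B) ∪ {s ∈ S : t lies on the path in T from x to t_s}, where t_s is a chosen node with s ∈ l(t_s). Then (T, l') is a tree-decomposition of G[B] and |l'(t)| ≤ |l(t)| for every node t. -/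
open Finset

variable {V : Type} [Fintype V] [DecidableEq V]

def inducedInclusion {ι : Type} (T : SimpleGraph ι) (s : Set ι) :
    T.induce s →g T := ⟨Subtype.val, fun h => h⟩

lemma exists_walk_of_induce_connected {ι : Type} {T : SimpleGraph ι} {s : Set ι}
    (h : (T.induce s).Connected) {a b : ι} (ha : a ∈ s) (hb : b ∈ s) :
    ∃ q : T.Walk a b, ∀ z ∈ q.support, z ∈ s := by
  obtain ⟨w⟩ := h ⟨a, ha⟩ ⟨b, hb⟩
  refine ⟨w.map (inducedInclusion T s), ?_⟩
  intro z hz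
  change z ∈ (w.map (inducedInclusion T s)).support at hz
  rw [SimpleGraph.Walk.support_map, List.mem_map] at hz
  obtain ⟨u, _, rfl⟩ := hz
  exact u.property

lemma reachable_induce_of_walk {ι : Type} {T : SimpleGraph ι} {s : Set ι} :
    ∀ {a b : ι} (w : T.Walk a b), (∀ u ∈ w.support, u ∈ s) →
    ∀ (ha : a ∈ s) (hb : b ∈ s), (T.induce s).Reachable ⟨a, ha⟩ ⟨b, hb⟩ := by
  intro a b w
  induction w with
  | nil => intro _ ha hb; exact SimpleGraph.Reachable.refl _
  | @cons a c b hadj w ih =>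
    intro hs ha hb
    have hc : c ∈ s := hs c (by simp [SimpleGraph.Walk.support_cons])
    have h1 : (T.induce s).Adj ⟨a, ha⟩ ⟨c, hc⟩ := hadj
    exact h1.reachable.trans (ih (fun u hu => hs u (by simp [SimpleGraph.Walk.support_cons, hu])) hc hb)

lemma induce_connected_of_base {ι : Type} {T : SimpleGraph ι} {s : Set ι} {b : ι}
    (hb : b ∈ s)
    (h : ∀ a ∈ s, ∃ q : T.Walk a b, ∀ z ∈ q.support, z ∈ s) :
    (T.induce s).Connected := by
  rw [SimpleGraph.connected_iff]
  constructor
  · rintro ⟨u, hu⟩ ⟨v, hv⟩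
    obtain ⟨qu, hqu⟩ := h u hu
    obtain ⟨qv, hqv⟩ := h v hv
    exact (reachable_induce_of_walk qu hqu hu hb).trans
      (reachable_induce_of_walk qv hqv hv hb).symm
  · exact ⟨⟨b, hb⟩⟩

/-- If every vertex of a walk avoids bag `t`, endpoints' nodes are joined avoiding `t`. -/
lemma bag_meets_walk {V : Type} [Fintype V] [DecidableEq V] {G : SimpleGraph V}
    {ι : Type} {T : SimpleGraph ι} {l : ι → Finset V} (htd : IsTreeDecomp G T l)
    (t : ι) :
    ∀ {a b : V} (w : G.Walk a b), (∀ v ∈ w.support, v ∉ l t) →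
    ∀ {ua ub : ι}, a ∈ l ua → b ∈ l ub → ∃ q : T.Walk ua ub, t ∉ q.support := by
  intro a b w
  induction w with
  | @nil a =>
    intro hw ua ub ha hb
    obtain ⟨q, hq⟩ := exists_walk_of_induce_connected (htd.2.2.2 a) ha hb
    exact ⟨q, fun ht => hw a (by simp) (hq t ht)⟩
  | @cons a c b hadj w ih =>
    intro hw ua ub ha hb
    obtain ⟨uc, hac, hcc⟩ := htd.2.2.1 a c hadj
    obtain ⟨q1, hq1⟩ := exists_walk_of_induce_connected (htd.2.2.2 a) ha hac
    obtain ⟨q2, hq2⟩ := ih (fun v hv => hw v (by simp [SimpleGraph.Walk.support_cons, hv])) hcc hb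
    refine ⟨q1.append q2, ?_⟩
    rw [SimpleGraph.Walk.mem_support_append_iff]
    rintro (ht | ht)
    · exact hw a (by simp) (hq1 t ht)
    · exact hq2 ht

/-- In a tree, every walk between two vertices visits every vertex of the
(unique) path between them. -/
lemma tree_path_forced {ι : Type} {T : SimpleGraph ι} (htree : T.IsTree)
    {x y t : ι} {p : T.Walk x y} (hp : p.IsPath) (ht : t ∈ p.support)
    (q : T.Walk x y) : t ∈ q.support := by
  classical
  have := htree.IsAcyclic.path_unique ⟨p, hp⟩ q.toPath
  have hsub := q.support_toPath_subset
  have : p.support = (q.toPath : T.Walk x y).support := by rw [← this]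
  exact hsub (this ▸ ht)

/-- Menger-style replacement: given a tree-decomposition
`(T, l)` of `G`, a node `x`, and vertex-disjoint paths `P s` from `l x`
to `s ∈ S` each meeting `B` only in `s`, the relabelling
`l' t = (l t ∩ B) ∪ {s ∈ S : t on the path from x to t_s}` is a
tree-decomposition of `G[B]` with `|l' t| ≤ |l t|` for every node. -/
theorem menger_replacement (G : SimpleGraph V) {ι : Type}
    (T : SimpleGraph ι) (l : ι → Finset V) (htd : IsTreeDecomp G T l)
    (x : ι) (S B : Finset V) (P : V → Finset V)
    (hpath : ∀ s ∈ S, ∃ a ∈ l x, ∃ w : G.Walk a s,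
      w.IsPath ∧ w.support.toFinset = P s)
    (hmeet : ∀ s ∈ S, P s ∩ B = {s})
    (hdisj : ∀ s ∈ S, ∀ s' ∈ S, s ≠ s' → P s ∩ P s' = ∅)
    (tsel : V → ι) (hts : ∀ s ∈ S, s ∈ l (tsel s))
    (l' : ι → Finset V)
    (hl' : ∀ t v, v ∈ l' t ↔
      (v ∈ l t ∧ v ∈ B) ∨ (v ∈ S ∧ OnTreePath T x (tsel v) t)) :
    IsTreeDecompOn G B T l' ∧ ∀ t, (l' t).card ≤ (l t).card := by
  classical
  have hSB : ∀ s ∈ S, s ∈ B := by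
    intro s hs
    have h1 := hmeet s hs
    have h2 : s ∈ P s ∩ B := h1 ▸ Finset.mem_singleton_self s
    exact (Finset.mem_inter.mp h2).2
  have hsep : ∀ t, ∀ s ∈ S, OnTreePath T x (tsel s) t → (P s ∩ l t).Nonempty := by
    intro t s hs hot
    by_contra hemp
    rw [Finset.not_nonempty_iff_eq_empty] at hemp
    obtain ⟨a, hax, w, hwp, hwP⟩ := hpath s hs
    have hav : ∀ v ∈ w.support, v ∉ l t := by
      intro v hv hvl
      have hvP : v ∈ P s := by rw [← hwP]; exact List.mem_toFinset.mpr hv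
      have : v ∈ P s ∩ l t := Finset.mem_inter.mpr ⟨hvP, hvl⟩
      simp [hemp] at this
    obtain ⟨q, hq⟩ := bag_meets_walk htd t w hav hax (hts s hs)
    obtain ⟨p, hp, htp⟩ := hot
    exact hq (tree_path_forced htd.1 hp htp q)
  refine ⟨⟨htd.1, ?_, ?_, ?_, ?_⟩, ?_⟩
  · intro t v hv
    rcases (hl' t v).mp hv with ⟨_, hB⟩ | ⟨hvS, _⟩
    · exact hB
    · exact hSB v hvS
  · intro v hv
    obtain ⟨t, ht⟩ := htd.2.1 v
    exact ⟨t, (hl' t v).mpr (Or.inl ⟨ht, hv⟩)⟩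
  · intro v w hv hw hadj
    obtain ⟨t, h1, h2⟩ := htd.2.2.1 v w hadj
    exact ⟨t, (hl' t v).mpr (Or.inl ⟨h1, hv⟩), (hl' t w).mpr (Or.inl ⟨h2, hw⟩)⟩
  · -- connectivity
    intro v hvB
    by_cases hvS : v ∈ S
    · obtain ⟨w0⟩ := htd.1.isConnected.preconnected x (tsel v)
      have hp0 : (w0.toPath : T.Walk x (tsel v)).IsPath := w0.toPath.2
      apply induce_connected_of_base (b := tsel v)
        ((hl' (tsel v) v).mpr (Or.inl ⟨hts v hvS, hvB⟩))
      intro a ha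
      rcases (hl' a v).mp ha with ⟨hla, _⟩ | ⟨_, hot⟩
      · obtain ⟨q, hq⟩ := exists_walk_of_induce_connected (htd.2.2.2 v) hla (hts v hvS)
        exact ⟨q, fun z hz => (hl' z v).mpr (Or.inl ⟨hq z hz, hvB⟩)⟩
      · obtain ⟨p, hp, hap⟩ := hot
        have hpe : p = (w0.toPath : T.Walk x (tsel v)) :=
          congrArg Subtype.val (htd.1.IsAcyclic.path_unique ⟨p, hp⟩ w0.toPath)
        rw [hpe] at hap
        refine ⟨(w0.toPath : T.Walk x (tsel v)).dropUntil a hap, fun z hz => ?_⟩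
        have hz0 : z ∈ (w0.toPath : T.Walk x (tsel v)).support :=
          SimpleGraph.Walk.support_dropUntil_subset _ hap hz
        exact (hl' z v).mpr (Or.inr ⟨hvS, ⟨_, hp0, hz0⟩⟩)
    · have hset : {t | v ∈ l' t} = {t | v ∈ l t} := by
        ext t
        simp only [Set.mem_setOf_eq, hl' t v]
        constructor
        · rintro (⟨h, _⟩ | ⟨h, _⟩)
          · exact h
          · exact absurd h hvS
        · intro h; exact Or.inl ⟨h, hvB⟩
      rw [hset]
      exact htd.2.2.2 v
  · -- cardinality
    intro t
    set f : V → V := fun v =>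
      if h : ((P v) ∩ l t).Nonempty ∧ v ∈ S ∧ v ∉ l t then h.1.choose else v with hf
    have hf1 : ∀ v, ∀ h : ((P v) ∩ l t).Nonempty ∧ v ∈ S ∧ v ∉ l t,
        f v ∈ P v ∩ l t := by
      intro v h
      simp only [hf, dif_pos h]
      exact h.1.choose_spec
    have hf2 : ∀ v, ¬(((P v) ∩ l t).Nonempty ∧ v ∈ S ∧ v ∉ l t) → f v = v := by
      intro v h
      simp only [hf, dif_neg h]
    have hmemB : ∀ v ∈ l' t, v ∈ B := by
      intro v hv
      rcases (hl' t v).mp hv with ⟨_, hB⟩ | ⟨hvS, _⟩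
      · exact hB
      · exact hSB v hvS
    apply Finset.card_le_card_of_injOn f
    · intro v hv
      by_cases hc : ((P v) ∩ l t).Nonempty ∧ v ∈ S ∧ v ∉ l t
      · exact (Finset.mem_inter.mp (hf1 v hc)).2
      · rw [hf2 v hc]
        by_contra hvl
        rcases (hl' t v).mp hv with ⟨h, _⟩ | ⟨hvS, hot⟩
        · exact hvl h
        · exact hc ⟨hsep t v hvS hot, hvS, hvl⟩
    · intro v hv v' hv' heq
      rw [Finset.mem_coe] at hv hv'
      by_cases hc : ((P v) ∩ l t).Nonempty ∧ v ∈ S ∧ v ∉ l t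
      · by_cases hc' : ((P v') ∩ l t).Nonempty ∧ v' ∈ S ∧ v' ∉ l t
        · by_contra hne
          have hd := hdisj v hc.2.1 v' hc'.2.1 hne
          have h1 := (Finset.mem_inter.mp (hf1 v hc)).1
          have h2 := (Finset.mem_inter.mp (hf1 v' hc')).1
          have : f v ∈ P v ∩ P v' := Finset.mem_inter.mpr ⟨h1, heq ▸ h2⟩
          simp [hd] at this
        · exfalso
          rw [hf2 v' hc'] at heq
          have hfB : f v ∉ B := by
            intro hB
            have : f v ∈ P v ∩ B :=
              Finset.mem_inter.mpr ⟨(Finset.mem_inter.mp (hf1 v hc)).1, hB⟩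
            rw [hmeet v hc.2.1] at this
            rw [Finset.mem_singleton] at this
            exact hc.2.2 (this ▸ (Finset.mem_inter.mp (hf1 v hc)).2)
          exact hfB (heq ▸ hmemB v' hv')
      · rw [hf2 v hc] at heq
        by_cases hc' : ((P v') ∩ l t).Nonempty ∧ v' ∈ S ∧ v' ∉ l t
        · exfalso
          have hfB : f v' ∉ B := by
            intro hB
            have : f v' ∈ P v' ∩ B :=
              Finset.mem_inter.mpr ⟨(Finset.mem_inter.mp (hf1 v' hc')).1, hB⟩
            rw [hmeet v' hc'.2.1] at this
            rw [Finset.mem_singleton] at this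
            exact hc'.2.2 (this ▸ (Finset.mem_inter.mp (hf1 v' hc')).2)
          exact hfB (heq ▸ hmemB v hv)
        · rw [hf2 v' hc'] at heq
          exact heq
end

section
/- Let B be a bramble in G and (T, l) a tree-decomposition of G such that no adhesion set l(t_1) ∩ l(t_2) of an edge of T covers B. Orient each edge t_1t_2 of T towards the side containing all members of B disjoint from l(t_1) ∩ l(t_2); this orientation is well-defined, and if t is the last node of a maximal directed path in T, then the bag l(t) covers B. -/
open Finset

variable {V : Type} [Fintype V] [DecidableEq V]

/-- The side of the edge `t₁t₂` containing `t₂`: union of bags over the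
nodes `t` whose tree path to `t₂` avoids `t₁`. -/
def Side {ι : Type} (T : SimpleGraph ι) (l : ι → Finset V) (t₁ t₂ : ι) :
    Set V :=
  {v | ∃ t, v ∈ l t ∧ ¬ OnTreePath T t t₂ t₁}

/-- The edge `t₁t₂` is oriented towards `t₂`: every member of `B` disjoint
from the adhesion set lies in the side containing `t₂`. -/
def OrientedToward (B : Set (Finset V)) {ι : Type} (T : SimpleGraph ι)
    (l : ι → Finset V) (t₁ t₂ : ι) : Prop :=
  ∀ X ∈ B, X ∩ (l t₁ ∩ l t₂) = ∅ → (↑X : Set V) ⊆ Side T l t₁ t₂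


section AuxLemmas

variable {ι : Type} {T : SimpleGraph ι}

private lemma path_unique (ht : T.IsTree) {a b : ι} {p q : T.Walk a b}
    (hp : p.IsPath) (hq : q.IsPath) : p = q :=
  (ht.existsUnique_path a b).unique hp hq

private lemma exists_path (ht : T.IsTree) (a b : ι) : ∃ p : T.Walk a b, p.IsPath := by
  classical
  obtain ⟨w⟩ := ht.isConnected.preconnected a b
  exact ⟨w.bypass, w.bypass_isPath⟩

private lemma adj_path_support (ht : T.IsTree) {u t : ι} (h : T.Adj u t)
    {p : T.Walk u t} (hp : p.IsPath) : p.support = [u, t] := by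
  have he : (SimpleGraph.Walk.cons h SimpleGraph.Walk.nil : T.Walk u t).IsPath := by
    simp [SimpleGraph.Walk.cons_isPath_iff, h.ne]
  have heq := path_unique ht hp he
  simp [heq]

private lemma isPath_concat {a b c : ι} {p : T.Walk a b} (hp : p.IsPath)
    (h : T.Adj b c) (hc : c ∉ p.support) : (p.concat h).IsPath := by
  rw [SimpleGraph.Walk.isPath_def, SimpleGraph.Walk.support_concat]
  rw [List.nodup_append]
  refine ⟨hp.support_nodup, List.nodup_singleton c, ?_⟩
  intro x hx y hx' hxy; subst hxy
  rw [List.mem_singleton] at hx'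
  exact hc (hx' ▸ hx)

/-- A node on the `t₂`-half of an edge cannot also be on the `t₁`-half. -/
private lemma not_both_sides (ht : T.IsTree) {t₁ t₂ s : ι} (hadj : T.Adj t₁ t₂)
    (h : OnTreePath T s t₂ t₁) : ¬ OnTreePath T s t₁ t₂ := by
  classical
  obtain ⟨p, hp, ht₁⟩ := h
  rintro ⟨q, hq, ht₂⟩
  have hq' : p.takeUntil t₁ ht₁ = q := path_unique ht (hp.takeUntil ht₁) hq
  have h2 : t₂ ∈ (p.takeUntil t₁ ht₁).support := by rw [hq']; exact ht₂
  have hnd : ((p.takeUntil t₁ ht₁).support ++ (p.dropUntil t₁ ht₁).support.tail).Nodup := by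
    rw [← SimpleGraph.Walk.support_append, SimpleGraph.Walk.take_spec]
    exact hp.support_nodup
  have h3 : t₂ ∈ (p.dropUntil t₁ ht₁).support.tail := by
    have hmem := (p.dropUntil t₁ ht₁).end_mem_support
    rw [(p.dropUntil t₁ ht₁).support_eq_cons, List.mem_cons] at hmem
    rcases hmem with h | h
    · exact absurd h hadj.ne'
    · exact h
  exact List.disjoint_of_nodup_append hnd h2 h3

/-- Every node is on one of the two halves of an edge. -/
private lemma side_total (ht : T.IsTree) {t₁ t₂ s : ι} (hadj : T.Adj t₁ t₂)
    (h : ¬ OnTreePath T s t₂ t₁) : OnTreePath T s t₁ t₂ := by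
  obtain ⟨p, hp⟩ := exists_path ht s t₂
  have h1 : t₁ ∉ p.support := fun hm => h ⟨p, hp, hm⟩
  refine ⟨p.concat hadj.symm, isPath_concat hp hadj.symm h1, ?_⟩
  rw [SimpleGraph.Walk.support_concat, List.mem_append]
  exact Or.inl p.end_mem_support

/-- If an edge of the tree crosses from the `t₂`-half to the `t₁`-half,
then it is the edge `t₂t₁` itself. -/
private lemma crossing (ht : T.IsTree) {t₁ t₂ a b : ι} (hadj : T.Adj t₁ t₂)
    (hab : T.Adj a b) (ha : ¬ OnTreePath T a t₂ t₁) (hb : OnTreePath T b t₂ t₁) :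
    b = t₁ ∧ a = t₂ := by
  classical
  obtain ⟨p, hp⟩ := exists_path ht a t₂
  have h1 : t₁ ∉ p.support := fun hm => ha ⟨p, hp, hm⟩
  obtain ⟨q, hq, hq1⟩ := hb
  have hbp : b ∉ p.support := by
    intro hm
    have heq : p.dropUntil b hm = q := path_unique ht (hp.dropUntil hm) hq
    exact h1 (SimpleGraph.Walk.support_dropUntil_subset p hm (heq ▸ hq1))
  have hw : (SimpleGraph.Walk.cons hab.symm p).IsPath := by
    rw [SimpleGraph.Walk.cons_isPath_iff]; exact ⟨hp, hbp⟩
  have heq : SimpleGraph.Walk.cons hab.symm p = q := path_unique ht hw hq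
  have hbt : b = t₁ := by
    rw [← heq] at hq1
    rw [SimpleGraph.Walk.support_cons, List.mem_cons] at hq1
    rcases hq1 with h | h
    · exact h.symm
    · exact absurd h h1
  refine ⟨hbt, ?_⟩
  subst hbt
  have he : (SimpleGraph.Walk.cons hadj SimpleGraph.Walk.nil).IsPath := by
    simp [SimpleGraph.Walk.cons_isPath_iff, hadj.ne]
  have h2 := path_unique ht hw he
  have h5 : p.support = [t₂] := by simpa using congrArg SimpleGraph.Walk.support h2
  have h6 := p.start_mem_support
  rw [h5, List.mem_singleton] at h6
  exact h6

/-- Two neighbours of `t` on the same path to `t` coincide. -/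
private lemma branch_unique (ht : T.IsTree) {t u u' r : ι} (hu : T.Adj u t)
    (hu' : T.Adj u' t) {p : T.Walk r t} (hp : p.IsPath) (h1 : u ∈ p.support)
    (h2 : u' ∈ p.support) : u = u' := by
  classical
  by_cases h : u = u'
  · exact h
  exfalso
  have hd : (p.dropUntil u h1).support = [u, t] :=
    adj_path_support ht hu (hp.dropUntil h1)
  have hsp : p.support = (p.takeUntil u h1).support ++ [t] := by
    conv_lhs => rw [← SimpleGraph.Walk.take_spec p h1]
    rw [SimpleGraph.Walk.support_append, hd]
    rfl
  have hnd : ((p.takeUntil u h1).support ++ [t]).Nodup := by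
    rw [← hsp]; exact hp.support_nodup
  have hu'' : u' ∈ (p.takeUntil u h1).support := by
    rw [hsp, List.mem_append] at h2
    rcases h2 with h2 | h2
    · exact h2
    · rw [List.mem_singleton] at h2
      exact absurd h2 hu'.ne
  have htt : t ∉ (p.takeUntil u h1).support := fun hm =>
    List.disjoint_of_nodup_append hnd hm (List.mem_singleton_self t)
  have hwp : ((p.takeUntil u h1).dropUntil u' hu'').IsPath :=
    (hp.takeUntil h1).dropUntil hu''
  have htw : t ∉ ((p.takeUntil u h1).dropUntil u' hu'').support := fun hm =>
    htt (SimpleGraph.Walk.support_dropUntil_subset _ hu'' hm)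
  have hcp := isPath_concat hwp hu htw
  have hcs : (((p.takeUntil u h1).dropUntil u' hu'').concat hu).support = [u', t] :=
    adj_path_support ht hu' hcp
  have hum : u ∈ (((p.takeUntil u h1).dropUntil u' hu'').concat hu).support := by
    rw [SimpleGraph.Walk.support_concat, List.mem_append]
    exact Or.inl ((p.takeUntil u h1).dropUntil u' hu'').end_mem_support
  rw [hcs, List.mem_cons] at hum
  rcases hum with h' | h'
  · exact h h'
  · rw [List.mem_singleton] at h'
    exact hu.ne h'

private lemma exists_branch {t r : ι} (p : T.Walk r t) :
    r ≠ t → ∃ u, T.Adj u t ∧ u ∈ p.support := by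
  induction p with
  | nil => exact fun h => absurd rfl h
  | @cons a c d h q ih =>
    intro _
    by_cases hc : c = d
    · subst hc
      exact ⟨a, h, SimpleGraph.Walk.start_mem_support _⟩
    · obtain ⟨u, h1, h2⟩ := ih hc
      exact ⟨u, h1, by rw [SimpleGraph.Walk.support_cons]; exact List.mem_cons_of_mem _ h2⟩

/-- Adjacent nodes distinct from `t` are in the same branch at `t`. -/
private lemma branch_adj (ht : T.IsTree) {t u r r' : ι} (hu : T.Adj u t)
    (hrr : T.Adj r r') (hr' : r' ≠ t) (h : OnTreePath T r t u) :
    OnTreePath T r' t u := by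
  classical
  obtain ⟨p, hp, hup⟩ := h
  by_cases hm : r' ∈ p.support
  · obtain ⟨u', hu', hmem⟩ := exists_branch (p.dropUntil r' hm) hr'
    have hee : u' = u := branch_unique ht hu' hu hp
      (SimpleGraph.Walk.support_dropUntil_subset p hm hmem) hup
    exact ⟨p.dropUntil r' hm, hp.dropUntil hm, hee ▸ hmem⟩
  · exact ⟨SimpleGraph.Walk.cons hrr.symm p,
      (SimpleGraph.Walk.cons_isPath_iff _ _).2 ⟨hp, hm⟩,
      by rw [SimpleGraph.Walk.support_cons]; exact List.mem_cons_of_mem _ hup⟩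

private lemma walk_change {ι' : Type} {H : SimpleGraph ι'} {P : ι' → Prop} :
    ∀ {a b : ι'}, H.Walk a b → P a → ¬ P b → ∃ x y, H.Adj x y ∧ P x ∧ ¬ P y := by
  intro a b w
  induction w with
  | nil => exact fun ha hb => absurd ha hb
  | @cons a c d h q ih =>
    intro ha hb
    by_cases hc : P c
    · exact ih hc hb
    · exact ⟨a, c, h, ha, hc⟩

private lemma walk_preserve {ι' : Type} {H : SimpleGraph ι'} {P : ι' → Prop}
    (hstep : ∀ x y, H.Adj x y → P x → P y) :
    ∀ {a b : ι'}, H.Walk a b → P a → P b := by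
  intro a b w
  induction w with
  | nil => exact id
  | @cons a c d h q ih => exact fun ha => ih (hstep _ _ h ha)

variable {G : SimpleGraph V} {l : ι → Finset V}

private lemma mem_side_total (htd : IsTreeDecomp G T l) {t₁ t₂ : ι}
    (hadj : T.Adj t₁ t₂) (v : V) :
    v ∈ Side T l t₁ t₂ ∨ v ∈ Side T l t₂ t₁ := by
  obtain ⟨s, hs⟩ := htd.2.1 v
  by_cases h : OnTreePath T s t₂ t₁
  · exact Or.inr ⟨s, hs, not_both_sides htd.1 hadj h⟩
  · exact Or.inl ⟨s, hs, h⟩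

private lemma side_inter (htd : IsTreeDecomp G T l) {t₁ t₂ : ι}
    (hadj : T.Adj t₁ t₂) {v : V} (h1 : v ∈ Side T l t₁ t₂)
    (h2 : v ∈ Side T l t₂ t₁) : v ∈ l t₁ ∧ v ∈ l t₂ := by
  obtain ⟨r, hr, hr2⟩ := h1
  obtain ⟨r', hr', hr2'⟩ := h2
  have hor' : OnTreePath T r' t₂ t₁ := side_total htd.1 hadj.symm hr2'
  obtain ⟨w⟩ := (htd.2.2.2 v).preconnected ⟨r, hr⟩ ⟨r', hr'⟩
  obtain ⟨x, y, hxy, hPx, hPy⟩ := walk_change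
    (P := fun s : {t' | v ∈ l t'} => ¬ OnTreePath T (↑s : ι) t₂ t₁)
    w hr2 (not_not_intro hor')
  have hxy' : T.Adj (↑x) (↑y) := hxy
  obtain ⟨he1, he2⟩ := crossing htd.1 hadj hxy' hPx (not_not.mp hPy)
  exact ⟨he1 ▸ y.2, he2 ▸ x.2⟩

private lemma conn_one_side (htd : IsTreeDecomp G T l) {t₁ t₂ : ι}
    (hadj : T.Adj t₁ t₂) {X : Finset V} (hX : IsConnectedSet G X)
    (hdisj : X ∩ (l t₁ ∩ l t₂) = ∅) :
    (↑X : Set V) ⊆ Side T l t₁ t₂ ∨ (↑X : Set V) ⊆ Side T l t₂ t₁ := by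
  have hnot : ∀ z : V, z ∈ X → z ∈ Side T l t₁ t₂ → z ∈ Side T l t₂ t₁ → False := by
    intro z hz hz1 hz2
    obtain ⟨m1, m2⟩ := side_inter htd hadj hz1 hz2
    have hzz : z ∈ X ∩ (l t₁ ∩ l t₂) := by
      rw [Finset.mem_inter, Finset.mem_inter]; exact ⟨hz, m1, m2⟩
    rw [hdisj] at hzz
    exact absurd hzz (Finset.notMem_empty z)
  by_contra hcon
  push_neg at hcon
  obtain ⟨h1, h2⟩ := hcon
  obtain ⟨x, hx, hx2⟩ := Set.not_subset.mp h1
  obtain ⟨y, hy, hy2⟩ := Set.not_subset.mp h2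
  have hy1 : y ∈ Side T l t₁ t₂ := (mem_side_total htd hadj y).resolve_right hy2
  obtain ⟨w⟩ := hX.preconnected ⟨y, hy⟩ ⟨x, hx⟩
  obtain ⟨a, b, hab, hPa, hPb⟩ := walk_change
    (P := fun z : (↑X : Set V) => (↑z : V) ∈ Side T l t₁ t₂) w hy1 hx2
  have hab' : G.Adj (↑a) (↑b) := hab
  obtain ⟨s, hsa, hsb⟩ := htd.2.2.1 (↑a) (↑b) hab'
  by_cases hs : OnTreePath T s t₂ t₁
  · have ha2 : (↑a : V) ∈ Side T l t₂ t₁ := ⟨s, hsa, not_both_sides htd.1 hadj hs⟩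
    exact hnot (↑a) (Finset.mem_coe.mp a.2) hPa ha2
  · exact hPb ⟨s, hsb, hs⟩

private lemma bags_same_branch (htd : IsTreeDecomp G T l) {t u : ι} (hu : T.Adj u t)
    {x : V} (hxt : x ∉ l t) {r r' : ι} (hr : x ∈ l r) (hr' : x ∈ l r')
    (h : OnTreePath T r t u) : OnTreePath T r' t u := by
  obtain ⟨w⟩ := (htd.2.2.2 x).preconnected ⟨r, hr⟩ ⟨r', hr'⟩
  refine walk_preserve (P := fun s : {t' | x ∈ l t'} => OnTreePath T (↑s : ι) t u)
    ?_ w h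
  intro a b hab hpa
  exact branch_adj htd.1 hu (hab : T.Adj (↑a) (↑b)) (fun he => hxt (he ▸ b.2)) hpa

end AuxLemmas

/-- if no adhesion set of `(T, l)` covers the bramble `B`,
then every edge of `T` can be oriented towards the side containing all
members of `B` disjoint from its adhesion set, and the bag of any node all
of whose incident edges are oriented towards it covers `B`. -/
theorem orientation_and_sink_covers (G : SimpleGraph V) {ι : Type}
    (T : SimpleGraph ι) (l : ι → Finset V) (B : Set (Finset V))
    (hbr : IsBramble G B) (htd : IsTreeDecomp G T l)
    (hadh : ∀ t₁ t₂, T.Adj t₁ t₂ → ¬ Covers (l t₁ ∩ l t₂) B) :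
    (∀ t₁ t₂, T.Adj t₁ t₂ →
        OrientedToward B T l t₁ t₂ ∨ OrientedToward B T l t₂ t₁) ∧
    ∀ t, (∀ u, T.Adj u t → OrientedToward B T l u t) → Covers (l t) B := by
  constructor
  · intro t₁ t₂ hadj
    by_contra hcon
    push_neg at hcon
    obtain ⟨h1, h2⟩ := hcon
    simp only [OrientedToward, not_forall] at h1 h2
    obtain ⟨X, hXB, hXd, hX2⟩ := h1
    obtain ⟨Y, hYB, hYd, hY2⟩ := h2
    have hXside : (↑X : Set V) ⊆ Side T l t₂ t₁ :=
      (conn_one_side htd hadj (hbr.1 X hXB) hXd).resolve_left hX2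
    have hYside : (↑Y : Set V) ⊆ Side T l t₁ t₂ :=
      (conn_one_side htd hadj.symm (hbr.1 Y hYB) hYd).resolve_left hY2
    have hXad : ∀ z ∈ X, z ∈ l t₁ → z ∈ l t₂ → False := by
      intro z hz m1 m2
      have hzz : z ∈ X ∩ (l t₁ ∩ l t₂) := by
        rw [Finset.mem_inter, Finset.mem_inter]; exact ⟨hz, m1, m2⟩
      rw [hXd] at hzz
      exact absurd hzz (Finset.notMem_empty z)
    have hYad : ∀ z ∈ Y, z ∈ l t₁ → z ∈ l t₂ → False := by
      intro z hz m1 m2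
      have hzz : z ∈ Y ∩ (l t₂ ∩ l t₁) := by
        rw [Finset.mem_inter, Finset.mem_inter]; exact ⟨hz, m2, m1⟩
      rw [hYd] at hzz
      exact absurd hzz (Finset.notMem_empty z)
    rcases hbr.2 X hXB Y hYB with ⟨v, hv⟩ | ⟨x, hxX, y, hyY, hxy⟩
    · rw [Finset.mem_inter] at hv
      obtain ⟨m1, m2⟩ := side_inter htd hadj (hYside hv.2) (hXside hv.1)
      exact hXad v hv.1 m1 m2
    · obtain ⟨s, hsx, hsy⟩ := htd.2.2.1 x y hxy
      by_cases hs : OnTreePath T s t₂ t₁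
      · have hy2 : y ∈ Side T l t₂ t₁ := ⟨s, hsy, not_both_sides htd.1 hadj hs⟩
        obtain ⟨m1, m2⟩ := side_inter htd hadj (hYside hyY) hy2
        exact hYad y hyY m1 m2
      · have hx1 : x ∈ Side T l t₁ t₂ := ⟨s, hsx, hs⟩
        obtain ⟨m1, m2⟩ := side_inter htd hadj hx1 (hXside hxX)
        exact hXad x hxX m1 m2
  · intro t hall X hXB
    by_contra hne
    have hXlt : ∀ x ∈ X, x ∉ l t := by
      intro x hx hxl
      exact hne ⟨x, Finset.mem_inter.mpr ⟨hxl, hx⟩⟩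
    have hXconn := hbr.1 X hXB
    obtain ⟨⟨x₀, hx₀'⟩⟩ := hXconn.nonempty
    have hx₀ : x₀ ∈ X := Finset.mem_coe.mp hx₀'
    obtain ⟨r₀, hr₀⟩ := htd.2.1 x₀
    have hr₀t : r₀ ≠ t := fun he => hXlt x₀ hx₀ (he ▸ hr₀)
    obtain ⟨p, hp⟩ := exists_path htd.1 r₀ t
    obtain ⟨u, hu, hup⟩ := exists_branch p hr₀t
    have hbase : OnTreePath T r₀ t u := ⟨p, hp, hup⟩
    have hclaim : ∀ x : (↑X : Set V), ∀ r, (↑x : V) ∈ l r → OnTreePath T r t u := by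
      intro x
      obtain ⟨w⟩ := hXconn.preconnected ⟨x₀, hx₀'⟩ x
      refine walk_preserve
        (P := fun z : (↑X : Set V) => ∀ r, (↑z : V) ∈ l r → OnTreePath T r t u)
        ?_ w ?_
      · intro a b hab hPa r hblr
        obtain ⟨s, hsa, hsb⟩ := htd.2.2.1 (↑a) (↑b) (hab : G.Adj (↑a) (↑b))
        exact bags_same_branch htd hu (hXlt (↑b) (Finset.mem_coe.mp b.2)) hsb hblr
          (hPa s hsa)
      · intro r hr
        exact bags_same_branch htd hu (hXlt x₀ hx₀) hr₀ hr hbase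
    have hdisj : X ∩ (l u ∩ l t) = ∅ := by
      ext v
      simp only [Finset.mem_inter, Finset.notMem_empty, iff_false, not_and]
      intro hv _ hvt
      exact hXlt v hv hvt
    obtain ⟨r, hr, hnr⟩ := hall u hu X hXB hdisj hx₀'
    exact hnr (hclaim ⟨x₀, hx₀'⟩ r hr)
end

section
/- Let B be a family of k-flaps containing a k-flap of every partial (<k)-decomposition of G, and let B' be the set of connected elements of B. Then B' has order > k, i.e., no vertex set of size ≤ k meets every element of B'. -/
open Finset

variable {V : Type} [Fintype V] [DecidableEq V]

/-! ### Auxiliary lemmas for Statement 13 -/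

lemma aux_reachable_induce_mono (G : SimpleGraph V) {s t : Set V} (hst : s ⊆ t)
    {a b : V} (ha : a ∈ s) (hb : b ∈ s)
    (h : (G.induce s).Reachable ⟨a, ha⟩ ⟨b, hb⟩) :
    (G.induce t).Reachable ⟨a, hst ha⟩ ⟨b, hst hb⟩ := by
  let f : G.induce s →g G.induce t := ⟨fun x => ⟨x.1, hst x.2⟩, fun h => h⟩
  exact h.map f

lemma aux_connected_of_hub {α : Type} (G : SimpleGraph α) (s : Set α) (a : α)
    (ha : a ∈ s) (h : ∀ b ∈ s, b = a ∨ G.Adj b a) : (G.induce s).Connected := by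
  have reach : ∀ x : s, (G.induce s).Reachable x ⟨a, ha⟩ := by
    intro x
    rcases h _ x.2 with he | hadj
    · have : x = ⟨a, ha⟩ := Subtype.ext he
      exact this ▸ SimpleGraph.Reachable.refl _
    · exact SimpleGraph.Adj.reachable hadj
  haveI : Nonempty s := ⟨⟨a, ha⟩⟩
  exact ⟨fun x y => (reach x).trans (reach y).symm⟩

lemma aux_isConnectedSet_singleton (G : SimpleGraph V) (v : V) :
    IsConnectedSet G {v} := by
  refine aux_connected_of_hub G _ v (by simp) ?_
  intro b hb
  left
  simpa using hb

lemma aux_isConnectedSet_union (G : SimpleGraph V) {C D : Finset V}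
    (hC : IsConnectedSet G C) (hD : IsConnectedSet G D) (x : V) (hxC : x ∈ C)
    (hbridge : x ∈ D ∨ ∃ y ∈ D, G.Adj x y) :
    IsConnectedSet G (C ∪ D) := by
  have hCs : (C : Set V) ⊆ ((C ∪ D : Finset V) : Set V) := by
    intro a ha; simp only [Finset.coe_union, Set.mem_union]; exact Or.inl ha
  have hDs : (D : Set V) ⊆ ((C ∪ D : Finset V) : Set V) := by
    intro a ha; simp only [Finset.coe_union, Set.mem_union]; exact Or.inr ha
  have hxCD : x ∈ ((C ∪ D : Finset V) : Set V) := hCs hxC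
  have reach : ∀ a : ((C ∪ D : Finset V) : Set V),
      (G.induce ((C ∪ D : Finset V) : Set V)).Reachable a ⟨x, hxCD⟩ := by
    intro a
    have ha : (a : V) ∈ C ∪ D := a.2
    rcases Finset.mem_union.mp ha with haC | haD
    · have := hC.preconnected ⟨a, haC⟩ ⟨x, hxC⟩
      exact aux_reachable_induce_mono G hCs haC hxC this
    · rcases hbridge with hxD | ⟨y, hyD, hadj⟩
      · have := hD.preconnected ⟨a, haD⟩ ⟨x, hxD⟩
        exact aux_reachable_induce_mono G hDs haD hxD this
      · have h1 := hD.preconnected ⟨a, haD⟩ ⟨y, hyD⟩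
        have h1' := aux_reachable_induce_mono G hDs haD hyD h1
        have hedge : (G.induce ((C ∪ D : Finset V) : Set V)).Adj
            ⟨y, hDs hyD⟩ ⟨x, hxCD⟩ := hadj.symm
        exact h1'.trans hedge.reachable
  haveI : Nonempty ((C ∪ D : Finset V) : Set V) := ⟨⟨x, hxCD⟩⟩
  exact ⟨fun a b => (reach a).trans (reach b).symm⟩

lemma aux_exists_comp (G : SimpleGraph V) (S : Finset V) {v : V} (hv : v ∉ S) :
    ∃ C, IsCompOf G S C ∧ v ∈ C := by
  classical
  set P : Finset V → Prop := fun D => v ∈ D ∧ D ∩ S = ∅ ∧ IsConnectedSet G D with hPdef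
  have hPv : P {v} :=
    ⟨Finset.mem_singleton_self v, Finset.singleton_inter_of_notMem hv,
      aux_isConnectedSet_singleton G v⟩
  obtain ⟨C, hCmem, hCmax⟩ := Finset.exists_max_image
    (Finset.univ.filter P) Finset.card
    ⟨{v}, Finset.mem_filter.mpr ⟨Finset.mem_univ _, hPv⟩⟩
  have hPC : P C := (Finset.mem_filter.mp hCmem).2
  refine ⟨C, ⟨⟨v, hPC.1⟩, hPC.2.1, hPC.2.2, ?_⟩, hPC.1⟩
  intro D hCD hDS hDconn
  have hPD : P D := ⟨hCD hPC.1, hDS, hDconn⟩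
  have := hCmax D (Finset.mem_filter.mpr ⟨Finset.mem_univ _, hPD⟩)
  exact (Finset.eq_of_subset_of_card_le hCD this).symm

lemma aux_mem_of_adj_comp {G : SimpleGraph V} {S C : Finset V}
    (hC : IsCompOf G S C) {v w : V} (hv : v ∈ C) (hw : w ∉ S)
    (hadj : G.Adj v w) : w ∈ C := by
  have hconn : IsConnectedSet G (C ∪ {w}) :=
    aux_isConnectedSet_union G hC.2.2.1 (aux_isConnectedSet_singleton G w) v hv
      (Or.inr ⟨w, Finset.mem_singleton_self w, hadj⟩)
  have hdisj : (C ∪ {w}) ∩ S = ∅ := by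
    rw [Finset.union_inter_distrib_right, hC.2.1,
      Finset.singleton_inter_of_notMem hw, Finset.empty_union]
  have heq := hC.2.2.2 (C ∪ {w}) Finset.subset_union_left hdisj hconn
  have : w ∈ C ∪ {w} := Finset.mem_union_right _ (Finset.mem_singleton_self w)
  rwa [heq] at this

lemma aux_comp_unique {G : SimpleGraph V} {S C D : Finset V}
    (hC : IsCompOf G S C) (hD : IsCompOf G S D) {v : V} (hvC : v ∈ C)
    (hvD : v ∈ D) : C = D := by
  have hconn : IsConnectedSet G (C ∪ D) :=
    aux_isConnectedSet_union G hC.2.2.1 hD.2.2.1 v hvC (Or.inl hvD)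
  have hdisj : (C ∪ D) ∩ S = ∅ := by
    rw [Finset.union_inter_distrib_right, hC.2.1, hD.2.1, Finset.empty_union]
  have h1 := hC.2.2.2 (C ∪ D) Finset.subset_union_left hdisj hconn
  have h2 := hD.2.2.2 (C ∪ D) Finset.subset_union_right hdisj hconn
  exact h1.symm.trans h2

/-- The star graph on `Option α` with centre `none`. -/
def starT (α : Type) : SimpleGraph (Option α) where
  Adj a b := (a = none ∧ b ≠ none) ∨ (a ≠ none ∧ b = none)
  symm := ⟨by intro a b h; tauto⟩
  loopless := ⟨by intro a h; tauto⟩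

lemma starT_connected (α : Type) : (starT α).Connected := by
  have reach : ∀ a : Option α, (starT α).Reachable a none := by
    intro a
    match a with
    | none => exact SimpleGraph.Reachable.refl _
    | some c =>
      exact SimpleGraph.Adj.reachable (Or.inr ⟨by simp, rfl⟩)
  haveI : Nonempty (Option α) := ⟨none⟩
  exact ⟨fun a b => (reach a).trans (reach b).symm⟩

lemma starT_adj {α : Type} (a b : Option α) :
    (starT α).Adj a b ↔ ((a = none ∧ b ≠ none) ∨ (a ≠ none ∧ b = none)) :=
  Iff.rfl

lemma starT_acyclic (α : Type) : (starT α).IsAcyclic := by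
  intro v c hc
  have h3 := hc.three_le_length
  cases c with
  | nil => simp at h3
  | @cons _ b _ h₁ c₁ =>
    cases c₁ with
    | nil => simp at h3
    | @cons _ d _ h₂ c₂ =>
      cases c₂ with
      | nil => simp [SimpleGraph.Walk.length_cons] at h3
      | @cons _ e _ h₃ c₃ =>
        have hnd : (b :: d :: c₃.support).Nodup := by
          simpa [SimpleGraph.Walk.support_cons] using hc.support_nodup
        rw [starT_adj] at h₁ h₂ h₃
        by_cases hb : b = none
        · have hd : d ≠ none := by
            rcases h₂ with ⟨_, h⟩ | ⟨h, _⟩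
            · exact h
            · exact absurd hb h
          have he : e = none := by
            rcases h₃ with ⟨h, _⟩ | ⟨_, h⟩
            · exact absurd h hd
            · exact h
          have hmem : b ∈ d :: c₃.support :=
            List.mem_cons_of_mem _ (by rw [hb, ← he]; exact c₃.start_mem_support)
          exact (List.nodup_cons.mp hnd).1 hmem
        · have hv : v = none := by
            rcases h₁ with ⟨h, _⟩ | ⟨_, h⟩
            · exact h
            · exact absurd h hb
          have hd : d = none := by
            rcases h₂ with ⟨h, _⟩ | ⟨_, h⟩
            · exact absurd h hb
            · exact h
          have hmem : d ∈ c₃.support := by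
            rw [hd, ← hv]; exact c₃.end_mem_support
          exact (List.nodup_cons.mp (List.nodup_cons.mp hnd).2).1 hmem

/-- The bags of the star decomposition from `S`. -/
def starBag (G : SimpleGraph V) (S : Finset V) :
    Option {C : Finset V // IsCompOf G S C} → Finset V
  | none => S
  | some C => C.1 ∪ S

/-- if `B` is a family of `k`-flaps containing a `k`-flap of
every partial (<k)-decomposition of `G` (of tree-width `≥ k`), then the
subfamily `B'` of connected members of `B` has order `> k`: no vertex set
of size `≤ k` meets every element of `B'`. -/
theorem connected_flaps_order_gt (G : SimpleGraph V) (k : ℕ)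
    (htw : ¬ HasDecompOfWidthLT G k) (B : Set (Finset V))
    (hflaps : ∀ X ∈ B, FlapOf G k X)
    (hhit : ∀ (ι : Type) (T : SimpleGraph ι) (bag : ι → Finset V),
      IsPartialDecomp G k T bag → ∃ X, IsFlap k T bag X ∧ X ∈ B) :
    ∀ S : Finset V, S.card ≤ k →
      ¬ Covers S {X | X ∈ B ∧ IsConnectedSet G X} := by
  intro S hS hcov
  classical
  set ιS := {C : Finset V // IsCompOf G S C} with hι
  set T := starT ιS with hT
  set bag := starBag G S with hbag
  -- the star decomposition is a tree decomposition
  have htd : IsTreeDecomp G T bag := by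
    refine ⟨⟨starT_connected _, starT_acyclic _⟩, ?_, ?_, ?_⟩
    · intro v
      by_cases hv : v ∈ S
      · exact ⟨none, hv⟩
      · obtain ⟨C, hC, hvC⟩ := aux_exists_comp G S hv
        exact ⟨some ⟨C, hC⟩, Finset.mem_union_left _ hvC⟩
    · intro v w hadj
      by_cases hv : v ∈ S
      · by_cases hw : w ∈ S
        · exact ⟨none, hv, hw⟩
        · obtain ⟨C, hC, hwC⟩ := aux_exists_comp G S hw
          exact ⟨some ⟨C, hC⟩, Finset.mem_union_right _ hv,
            Finset.mem_union_left _ hwC⟩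
      · obtain ⟨C, hC, hvC⟩ := aux_exists_comp G S hv
        by_cases hw : w ∈ S
        · exact ⟨some ⟨C, hC⟩, Finset.mem_union_left _ hvC,
            Finset.mem_union_right _ hw⟩
        · have hwC : w ∈ C := aux_mem_of_adj_comp hC hvC hw hadj
          exact ⟨some ⟨C, hC⟩, Finset.mem_union_left _ hvC,
            Finset.mem_union_left _ hwC⟩
    · intro v
      by_cases hv : v ∈ S
      · refine aux_connected_of_hub T _ none hv ?_
        intro t _
        match t with
        | none => exact Or.inl rfl
        | some C => exact Or.inr (Or.inr ⟨by simp, rfl⟩)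
      · obtain ⟨C, hC, hvC⟩ := aux_exists_comp G S hv
        refine aux_connected_of_hub T _ (some ⟨C, hC⟩)
          (Finset.mem_union_left _ hvC) ?_
        intro t ht
        match t with
        | none => exact absurd ht hv
        | some D =>
          left
          have hvD : v ∈ D.1 := by
            rcases Finset.mem_union.mp ht with h | h
            · exact h
            · exact absurd h hv
          exact congrArg some (Subtype.ext (aux_comp_unique D.2 hC hvD hvC))
  -- it is a partial (<k)-decomposition
  have hpd : IsPartialDecomp G k T bag := by
    refine ⟨htd, ?_, ⟨none, hS⟩⟩
    intro t hint
    obtain ⟨u, u', ha, ha', hne⟩ := hint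
    match t with
    | none => exact hS
    | some C =>
      exfalso
      have hu : u = none := by
        rcases (starT_adj _ _).mp ha with ⟨h, _⟩ | ⟨_, h⟩
        · exact absurd h (Option.some_ne_none _)
        · exact h
      have hu' : u' = none := by
        rcases (starT_adj _ _).mp ha' with ⟨h, _⟩ | ⟨_, h⟩
        · exact absurd h (Option.some_ne_none _)
        · exact h
      exact hne (hu.trans hu'.symm)
  -- get a flap of this decomposition belonging to B
  obtain ⟨X, hXflap, hXB⟩ := hhit _ T bag hpd
  obtain ⟨t, u, hadj, huniq, hbig, hXeq⟩ := hXflap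
  match t with
  | none => exact absurd hbig (not_lt.mpr hS)
  | some C =>
    have hu : u = none := by
      rcases (starT_adj _ _).mp hadj with ⟨h, _⟩ | ⟨_, h⟩
      · exact absurd h (Option.some_ne_none _)
      · exact h
    have hXC : X = C.1 := by
      rw [hXeq, hu]
      show (C.1 ∪ S) \ S = C.1
      rw [Finset.union_sdiff_right]
      exact Finset.sdiff_eq_self_of_disjoint
        (Finset.disjoint_iff_inter_eq_empty.mpr C.2.2.1)
    have hmem : C.1 ∈ {X | X ∈ B ∧ IsConnectedSet G X} :=
      ⟨hXC ▸ hXB, C.2.2.2.1⟩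
    obtain ⟨a, ha⟩ := hcov C.1 hmem
    have hSC : S ∩ C.1 = ∅ := by
      rw [Finset.inter_comm]; exact C.2.2.1
    rw [hSC] at ha
    exact absurd ha (Finset.notMem_empty a)
end
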